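/- arXiv:1105.5013 — 2 statements merged into one kernel-verified Lean document; each statement's English description precedes it below -/
import Mathlib

section
/- Abstract compactness-to-Poincaré lemma: let X, Y₁, Y₂ be Hilbert spaces, A₁ : D(A₁) ⊆ X → Y₁ and A₂ : D(A₂) ⊆ X → Y₂ closed densely defined operators, and D := D(A₁) ∩ D(A₂) equipped with the graph norm. If the embedding D ↪ X is compact, then the kernel K = ker A₁ ∩ ker A₂ is finite dimensional and there exists c > 0 with ‖x‖_X ≤ c (‖A₁x‖²_{Y₁} + ‖A₂x‖²_{Y₂})^{1/2} for all x ∈ D orthogonal to K in X. -/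
open Filter RealInnerProductSpace

noncomputable section

/-- A closed operator's graph is closed: limits of graph sequences are in the graph. -/
lemma closed_pmap_limit {X Y : Type*} [NormedAddCommGroup X] [NormedSpace ℝ X]
    [NormedAddCommGroup Y] [NormedSpace ℝ Y]
    (A : X →ₗ.[ℝ] Y) (hA : A.IsClosed) (u : ℕ → X) (hu : ∀ k, u k ∈ A.domain)
    {x : X} {y : Y} (hx : Tendsto u atTop (nhds x))
    (hy : Tendsto (fun k => A ⟨u k, hu k⟩) atTop (nhds y)) :
    ∃ h : x ∈ A.domain, A ⟨x, h⟩ = y := by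
  have hmem : (x, y) ∈ A.graph := by
    refine hA.mem_of_tendsto (hx.prodMk_nhds hy) ?_
    exact Eventually.of_forall fun k => A.mem_graph ⟨u k, hu k⟩
  refine ⟨LinearPMap.mem_domain_of_mem_graph hmem, ?_⟩
  exact ((LinearPMap.image_iff (LinearPMap.mem_domain_of_mem_graph hmem)).mpr hmem).symm

/-- Abstract compactness-to-Poincaré lemma: `X, Y₁, Y₂` Hilbert spaces,
`A₁, A₂` closed densely defined (unbounded) operators from `X` to `Y₁` resp. `Y₂`.
If the embedding of `D := D(A₁) ∩ D(A₂)` (with the graph norm) into `X` is compact,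
then the joint kernel `K = ker A₁ ∩ ker A₂` is finite dimensional and there is
`c > 0` with `‖x‖ ≤ c (‖A₁x‖² + ‖A₂x‖²)^{1/2}` for all `x ∈ D` orthogonal to `K`. -/
theorem abstract_compactness_poincare
    {X Y1 Y2 : Type*}
    [NormedAddCommGroup X] [InnerProductSpace ℝ X] [CompleteSpace X]
    [NormedAddCommGroup Y1] [InnerProductSpace ℝ Y1] [CompleteSpace Y1]
    [NormedAddCommGroup Y2] [InnerProductSpace ℝ Y2] [CompleteSpace Y2]
    (A1 : X →ₗ.[ℝ] Y1) (A2 : X →ₗ.[ℝ] Y2)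
    (hA1 : A1.IsClosed) (hA2 : A2.IsClosed)
    (hd1 : Dense (A1.domain : Set X)) (hd2 : Dense (A2.domain : Set X))
    -- compactness of the embedding `D(A₁) ∩ D(A₂) ↪ X` (graph norm):
    -- every graph-norm-bounded sequence has a subsequence converging in `X`
    (hcpt : ∀ (u : ℕ → X) (h1 : ∀ k, u k ∈ A1.domain) (h2 : ∀ k, u k ∈ A2.domain),
      (∃ M : ℝ, ∀ k, ‖u k‖ ≤ M ∧ ‖A1 ⟨u k, h1 k⟩‖ ≤ M ∧ ‖A2 ⟨u k, h2 k⟩‖ ≤ M) →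
      ∃ φ : ℕ → ℕ, StrictMono φ ∧ ∃ x : X, Tendsto (u ∘ φ) atTop (nhds x)) :
    ∃ K : Submodule ℝ X,
      (∀ x : X, x ∈ K ↔ ∃ h1 : x ∈ A1.domain, ∃ h2 : x ∈ A2.domain,
        A1 ⟨x, h1⟩ = 0 ∧ A2 ⟨x, h2⟩ = 0) ∧
      FiniteDimensional ℝ K ∧
      ∃ c : ℝ, 0 < c ∧ ∀ (x : X) (h1 : x ∈ A1.domain) (h2 : x ∈ A2.domain),
        (∀ k ∈ K, ⟪x, k⟫ = 0) →
        ‖x‖ ≤ c * Real.sqrt (‖A1 ⟨x, h1⟩‖ ^ 2 + ‖A2 ⟨x, h2⟩‖ ^ 2) := by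
  classical
  -- the joint kernel as a submodule
  let K : Submodule ℝ X :=
  { carrier := {x | ∃ h1 : x ∈ A1.domain, ∃ h2 : x ∈ A2.domain,
      A1 ⟨x, h1⟩ = 0 ∧ A2 ⟨x, h2⟩ = 0}
    add_mem' := by
      rintro a b ⟨ha1, ha2, hA1a, hA2a⟩ ⟨hb1, hb2, hA1b, hA2b⟩
      refine ⟨add_mem ha1 hb1, add_mem ha2 hb2, ?_, ?_⟩
      · have : (⟨a + b, add_mem ha1 hb1⟩ : A1.domain) = ⟨a, ha1⟩ + ⟨b, hb1⟩ := rfl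
        rw [this, A1.map_add, hA1a, hA1b, add_zero]
      · have : (⟨a + b, add_mem ha2 hb2⟩ : A2.domain) = ⟨a, ha2⟩ + ⟨b, hb2⟩ := rfl
        rw [this, A2.map_add, hA2a, hA2b, add_zero]
    zero_mem' := by
      refine ⟨zero_mem _, zero_mem _, ?_, ?_⟩
      · have : (⟨(0:X), zero_mem _⟩ : A1.domain) = 0 := rfl
        rw [this]; exact A1.map_zero
      · have : (⟨(0:X), zero_mem _⟩ : A2.domain) = 0 := rfl
        rw [this]; exact A2.map_zero
    smul_mem' := by
      rintro c a ⟨ha1, ha2, hA1a, hA2a⟩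
      refine ⟨Submodule.smul_mem _ c ha1, Submodule.smul_mem _ c ha2, ?_, ?_⟩
      · have : (⟨c • a, Submodule.smul_mem _ c ha1⟩ : A1.domain) = c • ⟨a, ha1⟩ := rfl
        rw [this, A1.map_smul, hA1a, smul_zero]
      · have : (⟨c • a, Submodule.smul_mem _ c ha2⟩ : A2.domain) = c • ⟨a, ha2⟩ := rfl
        rw [this, A2.map_smul, hA2a, smul_zero] }
  have hKmem : ∀ x : X, x ∈ K ↔ ∃ h1 : x ∈ A1.domain, ∃ h2 : x ∈ A2.domain,
      A1 ⟨x, h1⟩ = 0 ∧ A2 ⟨x, h2⟩ = 0 := fun x => Iff.rfl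
  refine ⟨K, hKmem, ?_, ?_⟩
  · -- finite dimensionality via compactness of the closed unit ball of K
    have hball : IsCompact (Metric.closedBall (0 : K) 1) := by
      rw [isCompact_iff_isSeqCompact]
      intro v hv
      choose h1 h2 hAv1 hAv2 using fun k => (hKmem _).mp (v k).2
      have hnorm : ∀ k, ‖(v k : X)‖ ≤ 1 := by
        intro k
        have := hv k
        simpa [Metric.mem_closedBall, dist_eq_norm] using this
      obtain ⟨φ, hφ, x, hx⟩ := hcpt (fun k => (v k : X)) h1 h2
        ⟨1, fun k => ⟨hnorm k, by rw [hAv1 k]; simp, by rw [hAv2 k]; simp⟩⟩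
      have hxK : x ∈ K := by
        obtain ⟨hx1, hx1'⟩ := closed_pmap_limit A1 hA1 (fun k => (v (φ k) : X))
          (fun k => h1 (φ k)) hx (tendsto_const_nhds.congr fun k => (hAv1 (φ k)).symm)
        obtain ⟨hx2, hx2'⟩ := closed_pmap_limit A2 hA2 (fun k => (v (φ k) : X))
          (fun k => h2 (φ k)) hx (tendsto_const_nhds.congr fun k => (hAv2 (φ k)).symm)
        exact ⟨hx1, hx2, hx1', hx2'⟩
      refine ⟨⟨x, hxK⟩, ?_, φ, hφ, ?_⟩
      · have hnx : ‖x‖ ≤ 1 :=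
          le_of_tendsto (hx.norm) (Eventually.of_forall fun k => hnorm (φ k))
        simpa [Metric.mem_closedBall, dist_eq_norm] using hnx
      · rw [tendsto_subtype_rng]
        exact hx
    exact FiniteDimensional.of_isCompact_closedBall₀ ℝ one_pos hball
  · -- Poincaré estimate by contradiction
    by_contra hcon
    push_neg at hcon
    have hstep : ∀ n : ℕ, ∃ x : X, ∃ h1 : x ∈ A1.domain, ∃ h2 : x ∈ A2.domain,
        (∀ k ∈ K, ⟪x, k⟫ = 0) ∧
        (n + 1 : ℝ) * Real.sqrt (‖A1 ⟨x, h1⟩‖ ^ 2 + ‖A2 ⟨x, h2⟩‖ ^ 2) < ‖x‖ := by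
      intro n
      exact hcon (n + 1) (by positivity)
    choose x h1 h2 hperp hlt using hstep
    have hxpos : ∀ n, 0 < ‖x n‖ := by
      intro n
      refine lt_of_le_of_lt ?_ (hlt n)
      positivity
    -- normalized sequence
    set w : ℕ → X := fun n => ‖x n‖⁻¹ • x n with hw
    have hw1 : ∀ n, w n ∈ A1.domain := fun n => Submodule.smul_mem _ _ (h1 n)
    have hw2 : ∀ n, w n ∈ A2.domain := fun n => Submodule.smul_mem _ _ (h2 n)
    have hwnorm : ∀ n, ‖w n‖ = 1 := by
      intro n
      rw [hw]
      simp [norm_smul, abs_of_pos (inv_pos.mpr (hxpos n)),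
        inv_mul_cancel₀ (hxpos n).ne']
    have hwA1 : ∀ n, A1 ⟨w n, hw1 n⟩ = ‖x n‖⁻¹ • A1 ⟨x n, h1 n⟩ := by
      intro n
      have : (⟨w n, hw1 n⟩ : A1.domain) = ‖x n‖⁻¹ • ⟨x n, h1 n⟩ := rfl
      rw [this, A1.map_smul]
    have hwA2 : ∀ n, A2 ⟨w n, hw2 n⟩ = ‖x n‖⁻¹ • A2 ⟨x n, h2 n⟩ := by
      intro n
      have : (⟨w n, hw2 n⟩ : A2.domain) = ‖x n‖⁻¹ • ⟨x n, h2 n⟩ := rfl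
      rw [this, A2.map_smul]
    -- bound on the graph seminorm of w n
    have hsqrt : ∀ n, Real.sqrt (‖A1 ⟨w n, hw1 n⟩‖ ^ 2 + ‖A2 ⟨w n, hw2 n⟩‖ ^ 2)
        < (n + 1 : ℝ)⁻¹ := by
      intro n
      have key : Real.sqrt (‖A1 ⟨x n, h1 n⟩‖ ^ 2 + ‖A2 ⟨x n, h2 n⟩‖ ^ 2)
          < ‖x n‖ / (n + 1 : ℝ) := by
        rw [lt_div_iff₀ (by positivity : (0:ℝ) < (n:ℝ) + 1)]
        calc Real.sqrt (‖A1 ⟨x n, h1 n⟩‖ ^ 2 + ‖A2 ⟨x n, h2 n⟩‖ ^ 2) * ((n:ℝ) + 1)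
            = ((n:ℝ) + 1) * Real.sqrt (‖A1 ⟨x n, h1 n⟩‖ ^ 2 + ‖A2 ⟨x n, h2 n⟩‖ ^ 2) :=
              mul_comm _ _
          _ < ‖x n‖ := hlt n
      have hrw : Real.sqrt (‖A1 ⟨w n, hw1 n⟩‖ ^ 2 + ‖A2 ⟨w n, hw2 n⟩‖ ^ 2)
          = ‖x n‖⁻¹ * Real.sqrt (‖A1 ⟨x n, h1 n⟩‖ ^ 2 + ‖A2 ⟨x n, h2 n⟩‖ ^ 2) := by
        rw [hwA1, hwA2]
        rw [norm_smul, norm_smul, mul_pow, mul_pow, ← mul_add, Real.sqrt_mul (by positivity)]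
        simp [Real.sqrt_sq_eq_abs, abs_of_pos (inv_pos.mpr (hxpos n))]
      rw [hrw]
      calc ‖x n‖⁻¹ * Real.sqrt (‖A1 ⟨x n, h1 n⟩‖ ^ 2 + ‖A2 ⟨x n, h2 n⟩‖ ^ 2)
          < ‖x n‖⁻¹ * (‖x n‖ / (n + 1 : ℝ)) := by
            exact mul_lt_mul_of_pos_left key (inv_pos.mpr (hxpos n))
        _ = ((n:ℝ) + 1)⁻¹ := by
            rw [div_eq_mul_inv, ← mul_assoc, inv_mul_cancel₀ (hxpos n).ne', one_mul]
    have hbA1 : ∀ n, ‖A1 ⟨w n, hw1 n⟩‖ ≤ ((n:ℝ) + 1)⁻¹ := by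
      intro n
      refine le_of_lt (lt_of_le_of_lt ?_ (hsqrt n))
      exact Real.le_sqrt_of_sq_le (le_add_of_nonneg_right (sq_nonneg _))
    have hbA2 : ∀ n, ‖A2 ⟨w n, hw2 n⟩‖ ≤ ((n:ℝ) + 1)⁻¹ := by
      intro n
      refine le_of_lt (lt_of_le_of_lt ?_ (hsqrt n))
      exact Real.le_sqrt_of_sq_le (le_add_of_nonneg_left (sq_nonneg _))
    -- compactness
    obtain ⟨φ, hφ, z, hz⟩ := hcpt w hw1 hw2 ⟨1, fun n =>
      ⟨le_of_eq (hwnorm n), le_trans (hbA1 n) (by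
        rw [inv_le_one_iff₀]; right; push_cast; linarith),
       le_trans (hbA2 n) (by
        rw [inv_le_one_iff₀]; right; push_cast; linarith)⟩⟩
    -- A1, A2 values tend to 0 along the subsequence
    have htend0 : Tendsto (fun n : ℕ => ((n:ℝ) + 1)⁻¹) atTop (nhds 0) :=
      tendsto_one_div_add_atTop_nhds_zero_nat.congr (by intro n; rw [one_div])
    have hA1tend : Tendsto (fun k => A1 ⟨w (φ k), hw1 (φ k)⟩) atTop (nhds 0) := by
      rw [tendsto_zero_iff_norm_tendsto_zero]
      refine squeeze_zero (fun k => norm_nonneg _)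
        (fun k => le_trans (hbA1 (φ k)) ?_) htend0
      gcongr
      exact_mod_cast hφ.id_le k
    have hA2tend : Tendsto (fun k => A2 ⟨w (φ k), hw2 (φ k)⟩) atTop (nhds 0) := by
      rw [tendsto_zero_iff_norm_tendsto_zero]
      refine squeeze_zero (fun k => norm_nonneg _)
        (fun k => le_trans (hbA2 (φ k)) ?_) htend0
      gcongr
      exact_mod_cast hφ.id_le k
    -- the limit z lies in K
    have hzK : z ∈ K := by
      obtain ⟨hz1, hz1'⟩ := closed_pmap_limit A1 hA1 (fun k => w (φ k))
        (fun k => hw1 (φ k)) hz hA1tend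
      obtain ⟨hz2, hz2'⟩ := closed_pmap_limit A2 hA2 (fun k => w (φ k))
        (fun k => hw2 (φ k)) hz hA2tend
      exact ⟨hz1, hz2, hz1', hz2'⟩
    -- z is orthogonal to K
    have hzperp : ∀ k ∈ K, ⟪z, k⟫ = 0 := by
      intro k hk
      have hcont : Tendsto (fun j => ⟪w (φ j), k⟫) atTop (nhds ⟪z, k⟫) :=
        hz.inner (tendsto_const_nhds (x := k))
      have hwperp : ∀ j, ⟪w (φ j), k⟫ = (0:ℝ) := by
        intro j
        rw [hw]
        rw [real_inner_smul_left, hperp (φ j) k hk, mul_zero]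
      rw [show (fun j => ⟪w (φ j), k⟫) = fun _ => (0:ℝ) from funext hwperp] at hcont
      exact tendsto_nhds_unique hcont tendsto_const_nhds
    -- but ‖z‖ = 1, contradiction
    have hznorm : ‖z‖ = 1 := by
      have : Tendsto (fun k => ‖w (φ k)‖) atTop (nhds ‖z‖) := hz.norm
      have h1' : Tendsto (fun k : ℕ => (1:ℝ)) atTop (nhds ‖z‖) := by
        refine this.congr fun k => (hwnorm (φ k))
      exact tendsto_nhds_unique h1' tendsto_const_nhds
    have := hzperp z hzK
    rw [real_inner_self_eq_norm_sq, hznorm] at this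
    norm_num at this
end
end

section
/- Hodge–Helmholtz decomposition: under the Maxwell compactness property, L² q-forms decompose orthogonally as L²,q(Ω) = d D^{q-1}_c(Ω) ⊕ Δ^q₀(Ω), where the range d D^{q-1}_c(Ω) is closed (no closure needed). -/
open Filter MeasureTheory RealInnerProductSpace

noncomputable section
set_option synthInstance.maxHeartbeats 1000000
set_option maxHeartbeats 1000000

/-- The Hilbert space of square-integrable `q`-forms on `Ω ⊆ ℝ^N`, identified with
`L²`-functions on `Ω` with values in `ℝ^(N choose q)` (coefficients of a `q`-form). -/
abbrev FormL2 (N q : ℕ) (Ω : Set (EuclideanSpace ℝ (Fin N))) :=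
  MeasureTheory.Lp (α := EuclideanSpace ℝ (Fin N))
    (EuclideanSpace ℝ (Fin (N.choose q))) 2 (volume.restrict Ω)

/-- Hodge–Helmholtz decomposition: let `d` be the weak exterior derivative on
`(q-1)`-forms with domain `D^{q-1}_c(Ω)` (vanishing tangential trace), a closed
operator, and let `Δ^q₀(Ω) = {H ∈ L²,q : δH = 0 weakly} = (d D^{q-1}_c(Ω))^⊥`.
Assuming the Poincaré estimate resulting from the Maxwell compactness property,
`L²` `q`-forms decompose orthogonally as `L²,q(Ω) = d D^{q-1}_c(Ω) ⊕ Δ^q₀(Ω)`,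
the range `d D^{q-1}_c(Ω)` being closed (no closure needed). -/
theorem hodge_helmholtz_decomposition
    {N q : ℕ} (Ω : Set (EuclideanSpace ℝ (Fin N)))
    (hΩo : IsOpen Ω) (hΩne : Ω.Nonempty) (hΩb : Bornology.IsBounded Ω)
    -- the weak exterior derivative with domain `D^{q-1}_c(Ω)`
    (d : FormL2 N (q - 1) Ω →ₗ.[ℝ] FormL2 N q Ω)
    (hdc : d.IsClosed) (hdd : Dense (d.domain : Set (FormL2 N (q - 1) Ω)))
    -- `Δ^q₀(Ω)`: the weakly coclosed `q`-forms, i.e. the orthogonal complement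
    -- of the range of `d` (which is how the weak coderivative with this boundary
    -- condition is defined)
    (Δ₀ : Set (FormL2 N q Ω))
    (hΔ₀ : ∀ H : FormL2 N q Ω,
      H ∈ Δ₀ ↔ ∀ (E : FormL2 N (q - 1) Ω) (hE : E ∈ d.domain), ⟪d ⟨E, hE⟩, H⟫ = 0)
    -- the Poincaré estimate for `(q-1)`-forms resulting from the Maxwell
    -- compactness property
    (cp : ℝ) (hcp : 0 < cp)
    (hpoin : ∀ (E : FormL2 N (q - 1) Ω) (hE : E ∈ d.domain),
      (∀ (E' : FormL2 N (q - 1) Ω) (hE' : E' ∈ d.domain),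
        d ⟨E', hE'⟩ = 0 → ⟪E, E'⟫ = 0) →
      ‖E‖ ≤ cp * ‖d ⟨E, hE⟩‖) :
    -- the range of `d` is closed and `L²,q(Ω) = d D^{q-1}_c(Ω) ⊕ Δ^q₀(Ω)`,
    -- an orthogonal decomposition
    IsClosed {y : FormL2 N q Ω | ∃ (E : FormL2 N (q - 1) Ω) (hE : E ∈ d.domain),
        d ⟨E, hE⟩ = y} ∧
    (∀ y ∈ {y : FormL2 N q Ω | ∃ (E : FormL2 N (q - 1) Ω) (hE : E ∈ d.domain),
        d ⟨E, hE⟩ = y}, ∀ H ∈ Δ₀, ⟪y, H⟫ = 0) ∧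
    (∀ x : FormL2 N q Ω,
      ∃ y ∈ {y : FormL2 N q Ω | ∃ (E : FormL2 N (q - 1) Ω) (hE : E ∈ d.domain),
        d ⟨E, hE⟩ = y}, ∃ H ∈ Δ₀, x = y + H) := by
  classical
  set S : Set (FormL2 N q Ω) :=
    {y | ∃ (E : FormL2 N (q - 1) Ω) (hE : E ∈ d.domain), d ⟨E, hE⟩ = y} with hSdef
  -- the kernel of `d` as a submodule of the ambient space
  set K : Submodule ℝ (FormL2 N (q - 1) Ω) :=
    (LinearMap.ker d.toFun).map d.domain.subtype with hKdef
  have hKmem : ∀ E : FormL2 N (q - 1) Ω,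
      E ∈ K ↔ ∃ hE : E ∈ d.domain, d ⟨E, hE⟩ = 0 := by
    intro E
    constructor
    · rintro ⟨⟨E', hE'⟩, hker, rfl⟩
      exact ⟨hE', hker⟩
    · rintro ⟨hE, h0⟩
      exact ⟨⟨E, hE⟩, h0, rfl⟩
  -- the kernel is closed since `d` is a closed operator
  have hKclosed : IsClosed (K : Set (FormL2 N (q - 1) Ω)) := by
    rw [← isSeqClosed_iff_isClosed]
    intro u E hu hlim
    have hmem : ∀ n, ((u n, (0 : FormL2 N q Ω)) : _ × _) ∈ d.graph := by
      intro n
      obtain ⟨hE, h0⟩ := (hKmem (u n)).1 (hu n)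
      rw [LinearPMap.mem_graph_iff]
      exact ⟨⟨u n, hE⟩, rfl, h0⟩
    have hlim2 : Tendsto (fun n => ((u n, (0 : FormL2 N q Ω)) : _ × _)) atTop
        (nhds (E, 0)) := (hlim.prodMk_nhds tendsto_const_nhds)
    have : ((E, (0 : FormL2 N q Ω)) : _ × _) ∈ d.graph :=
      hdc.isSeqClosed hmem hlim2
    rw [LinearPMap.mem_graph_iff] at this
    obtain ⟨⟨E', hE'⟩, h1, h2⟩ := this
    dsimp at h1 h2
    subst h1
    exact (hKmem _).2 ⟨hE', h2⟩
  haveI : CompleteSpace K := hKclosed.completeSpace_coe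
  -- given `y ∈ S`, produce a preimage orthogonal to the kernel
  have hrep : ∀ y ∈ S, ∃ (E : FormL2 N (q - 1) Ω) (hE : E ∈ d.domain),
      E ∈ Kᗮ ∧ d ⟨E, hE⟩ = y := by
    rintro y ⟨E, hE, rfl⟩
    have hPK : (↑(K.orthogonalProjectionOnto E) : FormL2 N (q - 1) Ω) ∈ K :=
      (K.orthogonalProjectionOnto E).2
    obtain ⟨hPdom, hP0⟩ := (hKmem _).1 hPK
    refine ⟨E - K.orthogonalProjectionOnto E, d.domain.sub_mem hE hPdom,
      Submodule.sub_starProjection_mem_orthogonal (K := K) E, ?_⟩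
    have : (⟨E - K.orthogonalProjectionOnto E, d.domain.sub_mem hE hPdom⟩ : d.domain)
        = ⟨E, hE⟩ - ⟨_, hPdom⟩ := rfl
    rw [this, d.map_sub, hP0, sub_zero]
  -- key estimate: preimages orthogonal to the kernel obey the Poincaré bound
  have hest : ∀ (E : FormL2 N (q - 1) Ω) (hE : E ∈ d.domain), E ∈ Kᗮ →
      ‖E‖ ≤ cp * ‖d ⟨E, hE⟩‖ := by
    intro E hE hEo
    refine hpoin E hE ?_
    intro E' hE' h0
    exact (K.mem_orthogonal' E).1 hEo E' ((hKmem E').2 ⟨hE', h0⟩)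
  -- closedness of the range
  have hSclosed : IsClosed S := by
    rw [← isSeqClosed_iff_isClosed]
    intro u y hu hlim
    choose E hEdom hEo hdE using fun n => hrep (u n) (hu n)
    have hdiff : ∀ m n, ‖E m - E n‖ ≤ cp * ‖u m - u n‖ := by
      intro m n
      have hdm : E m - E n ∈ d.domain := d.domain.sub_mem (hEdom m) (hEdom n)
      have heq : (⟨E m - E n, hdm⟩ : d.domain) = ⟨E m, hEdom m⟩ - ⟨E n, hEdom n⟩ := rfl
      have := hest (E m - E n) hdm (Kᗮ.sub_mem (hEo m) (hEo n))
      rwa [heq, d.map_sub, hdE m, hdE n] at this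
    have hucau : CauchySeq u := hlim.cauchySeq
    have hEcau : CauchySeq E := by
      rw [Metric.cauchySeq_iff] at hucau ⊢
      intro ε hε
      obtain ⟨M, hM⟩ := hucau (ε / cp) (by positivity)
      refine ⟨M, fun m hm n hn => ?_⟩
      have h1 := hdiff m n
      have h2 := hM m hm n hn
      rw [dist_eq_norm] at h2 ⊢
      calc ‖E m - E n‖ ≤ cp * ‖u m - u n‖ := h1
        _ < cp * (ε / cp) := by
            exact mul_lt_mul_of_pos_left h2 hcp
        _ = ε := by field_simp
    obtain ⟨Elim, hElim⟩ := cauchySeq_tendsto_of_complete hEcau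
    have hmem : ∀ n, ((E n, u n) : _ × _) ∈ d.graph := by
      intro n
      rw [LinearPMap.mem_graph_iff]
      exact ⟨⟨E n, hEdom n⟩, rfl, hdE n⟩
    have : ((Elim, y) : _ × _) ∈ d.graph :=
      hdc.isSeqClosed hmem (hElim.prodMk_nhds hlim)
    rw [LinearPMap.mem_graph_iff] at this
    obtain ⟨⟨E', hE'⟩, h1, h2⟩ := this
    dsimp at h1 h2
    subst h1
    exact ⟨E', hE', h2⟩
  refine ⟨hSclosed, ?_, ?_⟩
  · rintro y ⟨E, hE, rfl⟩ H hH
    exact (hΔ₀ H).1 hH E hE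
  · -- decomposition via orthogonal projection onto the closed range
    intro x
    set R : Submodule ℝ (FormL2 N q Ω) := LinearMap.range (d.toFun.comp (LinearMap.id)) with hRdef
    have hRS : (R : Set (FormL2 N q Ω)) = S := by
      ext y
      constructor
      · rintro ⟨⟨E, hE⟩, rfl⟩
        exact ⟨E, hE, rfl⟩
      · rintro ⟨E, hE, rfl⟩
        exact ⟨⟨E, hE⟩, rfl⟩
    have hRclosed : IsClosed (R : Set (FormL2 N q Ω)) := hRS ▸ hSclosed
    haveI : CompleteSpace R := hRclosed.completeSpace_coe
    obtain ⟨y, hy, H, hH, hx⟩ := R.exists_add_mem_mem_orthogonal x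
    refine ⟨y, hRS ▸ hy, H, ?_, hx⟩
    rw [hΔ₀]
    intro E hE
    have : d ⟨E, hE⟩ ∈ R := ⟨⟨E, hE⟩, rfl⟩
    exact hH _ this
end
end
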